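/- arXiv:2010.01167 — 3 statements merged into one kernel-verified Lean document; each statement's English description precedes it below -/
import Mathlib

section
/- The inner product ⟨ok̄ ⊗ (−½), φ⟩ equals 0; i.e., in the FR state the outcome ok̄ for the first lab is exclusive of the outcome z = −½ for the second lab. -/
noncomputable section
open scoped InnerProductSpace
abbrev Q : Type := EuclideanSpace ℂ (Fin 2)
abbrev QQ : Type := EuclideanSpace ℂ (Fin 2 × Fin 2)
/-- standard basis of ℂ² -/
def e (i : Fin 2) : Q := EuclideanSpace.single i 1
/-- tensor product of two qubit vectors -/
def tp (a b : Q) : QQ := WithLp.toLp 2 (fun p : Fin 2 × Fin 2 => a p.1 * b p.2)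
/-- |h̄⟩ = e 0, |t̄⟩ = e 1, |−½⟩ = e 0, |½⟩ = e 1 -/
def phi : QQ := (Real.sqrt (1/3) : ℂ) • (tp (e 0) (e 0) + tp (e 1) (e 0) + tp (e 1) (e 1))
def okb : Q := (Real.sqrt 2 : ℂ)⁻¹ • (e 0 - e 1)
def failb : Q := (Real.sqrt 2 : ℂ)⁻¹ • (e 0 + e 1)
def okv : Q := (Real.sqrt 2 : ℂ)⁻¹ • (e 0 - e 1)
def failv : Q := (Real.sqrt 2 : ℂ)⁻¹ • (e 0 + e 1)

theorem okbar_exclusive_of_z_neg_half : ⟪tp okb (e 0), phi⟫_ℂ = 0 := by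
  rw [PiLp.inner_apply, Fintype.sum_prod_type]
  simp only [Fin.sum_univ_two, phi, okb, tp, e, EuclideanSpace.single, PiLp.smul_apply,
    PiLp.add_apply, PiLp.sub_apply, PiLp.toLp_apply, PiLp.single_apply]
  norm_num
end
end

section
/- The probability that W obtains outcome 'ok' in the FR state is 1/6: the squared norm of ((I ⊗ ⟨ok|) applied to φ) equals 1/6; equivalently |⟨h̄ ⊗ ok, φ⟩|² + |⟨t̄ ⊗ ok, φ⟩|² = 1/6. -/
noncomputable section
open scoped InnerProductSpace
theorem prob_w_ok :
    ‖⟪tp (e 0) okv, phi⟫_ℂ‖ ^ 2 + ‖⟪tp (e 1) okv, phi⟫_ℂ‖ ^ 2 = 1 / 6 := by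
  have hval : ⟪tp (e 0) okv, phi⟫_ℂ = (Real.sqrt (1/3) : ℂ) * (Real.sqrt 2 : ℂ)⁻¹ ∧
      ⟪tp (e 1) okv, phi⟫_ℂ = 0 := by
    constructor <;>
    · simp only [PiLp.inner_apply, Fintype.sum_prod_type, Fin.sum_univ_two,
        tp, phi, okv, e, EuclideanSpace.single_apply, PiLp.smul_apply, PiLp.add_apply,
        PiLp.sub_apply, smul_eq_mul]
      push_cast
      ring_nf
      simp [map_inv₀, Complex.conj_ofReal, mul_comm]
  rw [hval.1, hval.2]
  rw [norm_mul, norm_inv]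
  simp only [Complex.norm_real, Real.norm_eq_abs, abs_of_nonneg (Real.sqrt_nonneg _),
    norm_zero]
  rw [mul_pow, Real.sq_sqrt (by norm_num : (0:ℝ) ≤ 1/3), inv_pow,
    Real.sq_sqrt (by norm_num : (0:ℝ) ≤ 2)]
  norm_num
end
end

section
/- Conditional on the outcome ok̄, the probability of outcome ok is 1/2: the squared amplitudes satisfy |⟨ok̄ ⊗ ok, φ⟩|² / (|⟨ok̄ ⊗ ok, φ⟩|² + |⟨ok̄ ⊗ fail, φ⟩|²) = 1/2. -/
noncomputable section
open scoped InnerProductSpace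
theorem conditional_prob_ok_given_okbar :
    ‖⟪tp okb okv, phi⟫_ℂ‖ ^ 2 /
      (‖⟪tp okb okv, phi⟫_ℂ‖ ^ 2 + ‖⟪tp okb failv, phi⟫_ℂ‖ ^ 2) = 1 / 2 := by
  have hs2 : (Real.sqrt 2 : ℂ) * (Real.sqrt 2 : ℂ) = 2 := by
    norm_cast
    rw [Real.mul_self_sqrt (by norm_num : (0:ℝ) ≤ 2)]
  have h1 : ⟪tp okb okv, phi⟫_ℂ = (Real.sqrt (1/3) : ℂ) * 2⁻¹ := by
    simp [PiLp.inner_apply, phi, okb, okv, tp, e, EuclideanSpace.single_apply,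
      Fintype.sum_prod_type, Fin.sum_univ_two, PiLp.smul_apply, PiLp.add_apply, PiLp.sub_apply,
      smul_eq_mul, map_mul, map_inv₀]
    field_simp
    ring_nf
    rw [sq, hs2]
  have h2 : ⟪tp okb failv, phi⟫_ℂ = -((Real.sqrt (1/3) : ℂ) * 2⁻¹) := by
    simp [PiLp.inner_apply, phi, okb, failv, tp, e, EuclideanSpace.single_apply,
      Fintype.sum_prod_type, Fin.sum_univ_two, PiLp.smul_apply, PiLp.add_apply, PiLp.sub_apply,
      smul_eq_mul, map_mul, map_inv₀]
    field_simp
    ring_nf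
    rw [sq, hs2]
  rw [h1, h2, norm_neg]
  have : ‖(Real.sqrt (1/3) : ℂ) * 2⁻¹‖ ^ 2 = 1/12 := by
    simp [norm_mul, Complex.norm_real, mul_pow, abs_of_nonneg (Real.sqrt_nonneg _),
      Real.sq_sqrt (by norm_num : (0:ℝ) ≤ 1/3)]
    norm_num
  rw [this]; norm_num
end
end
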